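/- If C is a rigid monoidal category (every object has left and right duals), then the Drinfeld center Center C is rigid: for every object (X, λ) of Center C there is a half-braiding λ* on the left dual X* of X, with components the mates (λ*)_A = (λ_{A*})* of the components of λ, such that the evaluation and coevaluation morphisms of X in C are morphisms in Center C, exhibiting (X*, λ*) as a left dual of (X, λ) in Center C; similarly for right duals. -/

import Mathlib

open CategoryTheory CategoryTheory.MonoidalCategory

universe v u

noncomputable section

set_option linter.unusedSectionVars false

namespace CenterRigidAux

variable {C : Type u} [Category.{v} C] [MonoidalCategory C]

variable (X₀ D L : C) (b : HalfBraiding X₀) [ExactPairing X₀ D] [ExactPairing L X₀]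

/-- inverse naturality of a half-braiding -/
theorem nat_inv {U U' : C} (f : U ⟶ U') :
    f ▷ X₀ ≫ (b.β U').inv = (b.β U).inv ≫ X₀ ◁ f := by
  rw [Iso.comp_inv_eq, Category.assoc, b.naturality f, Iso.inv_hom_id_assoc]

/-- decomposition of the inverse of the half-braiding at a tensor product -/
theorem minv (U V : C) :
    (b.β (U ⊗ V)).inv = (α_ _ _ _).hom ≫ U ◁ (b.β V).inv ≫ (α_ _ _ _).inv ≫
      (b.β U).inv ▷ V ≫ (α_ _ _ _).hom := by
  rw [← cancel_epi (b.β (U ⊗ V)).hom, Iso.hom_inv_id, b.monoidal]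
  simp only [Category.assoc, Iso.hom_inv_id_assoc]
  simp [whisker_exchange_assoc, ← MonoidalCategory.whiskerLeft_comp_assoc,
    ← comp_whiskerRight_assoc]

/-- The twisted evaluation `X ⊗ D ⟶ 𝟙`. -/
def tev : X₀ ⊗ D ⟶ 𝟙_ C := (b.β D).hom ≫ ε_ X₀ D

/-- The twisted evaluation `L ⊗ X ⟶ 𝟙`. -/
def tev' : L ⊗ X₀ ⟶ 𝟙_ C := (b.β L).inv ≫ ε_ L X₀

/-- The comparison morphism from the right dual to the left dual. -/
def φ : D ⟶ L :=
  𝟙 D ⊗≫ η_ L X₀ ▷ D ⊗≫ L ◁ tev X₀ D b ⊗≫ 𝟙 L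

/-- The comparison morphism from the left dual to the right dual. -/
def χ : L ⟶ D :=
  𝟙 L ⊗≫ L ◁ η_ X₀ D ⊗≫ tev' X₀ L b ▷ D ⊗≫ 𝟙 D

theorem S4 : X₀ ◁ φ X₀ D L b ≫ ε_ L X₀ = tev X₀ D b := by
  dsimp only [φ]
  calc
    _ = 𝟙 _ ⊗≫ (X₀ ◁ η_ L X₀) ▷ D ⊗≫
        ((X₀ ⊗ L) ◁ tev X₀ D b ≫ ε_ L X₀ ▷ 𝟙_ C) ⊗≫ 𝟙 _ := by
      monoidal
    _ = 𝟙 _ ⊗≫ (X₀ ◁ η_ L X₀ ⊗≫ ε_ L X₀ ▷ X₀) ▷ D ⊗≫ tev X₀ D b := by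
      rw [whisker_exchange]; monoidal
    _ = _ := by rw [ExactPairing.coevaluation_evaluation'']; monoidal

theorem S5 : χ X₀ D L b ▷ X₀ ≫ ε_ X₀ D = tev' X₀ L b := by
  dsimp only [χ]
  calc
    _ = 𝟙 _ ⊗≫ L ◁ η_ X₀ D ▷ X₀ ⊗≫
        (tev' X₀ L b ▷ (D ⊗ X₀) ≫ 𝟙_ C ◁ ε_ X₀ D) ⊗≫ 𝟙 _ := by
      monoidal
    _ = 𝟙 _ ⊗≫ L ◁ (η_ X₀ D ▷ X₀ ⊗≫ X₀ ◁ ε_ X₀ D) ⊗≫ tev' X₀ L b := by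
      rw [← whisker_exchange]; monoidal
    _ = _ := by rw [ExactPairing.evaluation_coevaluation'']; monoidal

theorem S3 : φ X₀ D L b ▷ X₀ ≫ tev' X₀ L b = ε_ X₀ D := by
  dsimp only [tev']
  rw [← Category.assoc, nat_inv, Category.assoc, S4]
  dsimp only [tev]
  rw [Iso.inv_hom_id_assoc]

theorem S2 : X₀ ◁ χ X₀ D L b ≫ tev X₀ D b = ε_ L X₀ := by
  dsimp only [tev]
  rw [← Category.assoc, b.naturality, Category.assoc, S5]
  dsimp only [tev']
  rw [Iso.hom_inv_id_assoc]

theorem E1 : φ X₀ D L b ≫ χ X₀ D L b = 𝟙 D := by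
  dsimp only [χ]
  calc
    _ = 𝟙 _ ⊗≫ (φ X₀ D L b ▷ 𝟙_ C ≫ L ◁ η_ X₀ D) ⊗≫ tev' X₀ L b ▷ D ⊗≫ 𝟙 _ := by
      monoidal
    _ = 𝟙 _ ⊗≫ D ◁ η_ X₀ D ⊗≫ (φ X₀ D L b ▷ X₀ ≫ tev' X₀ L b) ▷ D ⊗≫ 𝟙 _ := by
      rw [← whisker_exchange]; monoidal
    _ = 𝟙 _ ⊗≫ (D ◁ η_ X₀ D ⊗≫ ε_ X₀ D ▷ D) ⊗≫ 𝟙 _ := by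
      rw [S3]; monoidal
    _ = _ := by rw [ExactPairing.coevaluation_evaluation'']; monoidal

theorem E2 : χ X₀ D L b ≫ φ X₀ D L b = 𝟙 L := by
  dsimp only [φ]
  calc
    _ = 𝟙 _ ⊗≫ (𝟙_ C ◁ χ X₀ D L b ≫ η_ L X₀ ▷ D) ⊗≫ L ◁ tev X₀ D b ⊗≫ 𝟙 _ := by
      monoidal
    _ = 𝟙 _ ⊗≫ η_ L X₀ ▷ L ⊗≫ L ◁ (X₀ ◁ χ X₀ D L b ≫ tev X₀ D b) ⊗≫ 𝟙 _ := by
      rw [whisker_exchange]; monoidal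
    _ = 𝟙 _ ⊗≫ (η_ L X₀ ▷ L ⊗≫ L ◁ ε_ L X₀) ⊗≫ 𝟙 _ := by
      rw [S2]; monoidal
    _ = _ := by rw [ExactPairing.evaluation_coevaluation'']; monoidal

/-- The component of the half-braiding mate, from `L ⊗ U` to `U ⊗ D`. -/
def Ξh (U : C) : L ⊗ U ⟶ U ⊗ D :=
  𝟙 (L ⊗ U) ⊗≫ (L ⊗ U) ◁ η_ X₀ D ⊗≫ (b.β (L ⊗ U)).inv ▷ D ⊗≫ ε_ L X₀ ▷ (U ⊗ D) ⊗≫ 𝟙 (U ⊗ D)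

/-- The inverse component of the half-braiding mate, from `U ⊗ D` to `L ⊗ U`. -/
def Ξi (U : C) : U ⊗ D ⟶ L ⊗ U :=
  𝟙 (U ⊗ D) ⊗≫ η_ L X₀ ▷ (U ⊗ D) ⊗≫ L ◁ (b.β (U ⊗ D)).hom ⊗≫ (L ⊗ U) ◁ ε_ X₀ D ⊗≫ 𝟙 (L ⊗ U)

theorem SX (U : C) : X₀ ◁ Ξi X₀ D L b U ≫ (α_ X₀ L U).inv ≫ ε_ L X₀ ▷ U ≫ (λ_ U).hom =
    (b.β (U ⊗ D)).hom ≫ (α_ U D X₀).hom ≫ U ◁ ε_ X₀ D ≫ (ρ_ U).hom := by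
  dsimp only [Ξi]
  calc
    _ = 𝟙 _ ⊗≫ (X₀ ◁ η_ L X₀) ▷ (U ⊗ D) ⊗≫
        ((X₀ ⊗ L) ◁ ((b.β (U ⊗ D)).hom ≫ (α_ U D X₀).hom ≫ U ◁ ε_ X₀ D ≫ (ρ_ U).hom) ≫
          ε_ L X₀ ▷ U) ⊗≫ 𝟙 _ := by
      monoidal
    _ = 𝟙 _ ⊗≫ (X₀ ◁ η_ L X₀ ⊗≫ ε_ L X₀ ▷ X₀) ▷ (U ⊗ D) ⊗≫
        ((b.β (U ⊗ D)).hom ≫ (α_ U D X₀).hom ≫ U ◁ ε_ X₀ D ≫ (ρ_ U).hom) ⊗≫ 𝟙 _ := by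
      rw [whisker_exchange]; monoidal
    _ = _ := by rw [ExactPairing.coevaluation_evaluation'']; monoidal

theorem SX' (U : C) : Ξh X₀ D L b U ▷ X₀ ≫ (α_ U D X₀).hom ≫ U ◁ ε_ X₀ D ≫ (ρ_ U).hom =
    (b.β (L ⊗ U)).inv ≫ (α_ X₀ L U).inv ≫ ε_ L X₀ ▷ U ≫ (λ_ U).hom := by
  dsimp only [Ξh]
  calc
    _ = 𝟙 _ ⊗≫ ((L ⊗ U : C)) ◁ (η_ X₀ D ▷ X₀) ⊗≫
        (((b.β (L ⊗ U)).inv ≫ (α_ X₀ L U).inv ≫ ε_ L X₀ ▷ U ≫ (λ_ U).hom) ▷ (D ⊗ X₀) ≫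
          U ◁ ε_ X₀ D) ⊗≫ 𝟙 _ := by
      monoidal
    _ = 𝟙 _ ⊗≫ ((L ⊗ U : C)) ◁ (η_ X₀ D ▷ X₀ ⊗≫ X₀ ◁ ε_ X₀ D) ⊗≫
        ((b.β (L ⊗ U)).inv ≫ (α_ X₀ L U).inv ≫ ε_ L X₀ ▷ U ≫ (λ_ U).hom) ⊗≫ 𝟙 _ := by
      rw [← whisker_exchange]; monoidal
    _ = _ := by rw [ExactPairing.evaluation_coevaluation'']; monoidal

theorem T4 (U : C) : Ξi X₀ D L b U ≫ Ξh X₀ D L b U = 𝟙 (U ⊗ D) := by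
  conv_lhs => rw [Ξh]
  calc
    _ = 𝟙 _ ⊗≫ (Ξi X₀ D L b U ▷ 𝟙_ C ≫ ((L ⊗ U : C)) ◁ η_ X₀ D) ⊗≫
        (b.β (L ⊗ U)).inv ▷ D ⊗≫ ε_ L X₀ ▷ (U ⊗ D) ⊗≫ 𝟙 _ := by
      monoidal
    _ = 𝟙 _ ⊗≫ ((U ⊗ D : C)) ◁ η_ X₀ D ⊗≫
        ((Ξi X₀ D L b U ▷ X₀ ≫ (b.β (L ⊗ U)).inv) ▷ D) ⊗≫ ε_ L X₀ ▷ (U ⊗ D) ⊗≫ 𝟙 _ := by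
      rw [← whisker_exchange]; monoidal
    _ = 𝟙 _ ⊗≫ ((U ⊗ D : C)) ◁ η_ X₀ D ⊗≫
        (((b.β (U ⊗ D)).inv ≫ X₀ ◁ Ξi X₀ D L b U) ▷ D) ⊗≫ ε_ L X₀ ▷ (U ⊗ D) ⊗≫ 𝟙 _ := by
      rw [nat_inv]
    _ = 𝟙 _ ⊗≫ ((U ⊗ D : C)) ◁ η_ X₀ D ⊗≫ ((b.β (U ⊗ D)).inv ≫
        (X₀ ◁ Ξi X₀ D L b U ≫ (α_ X₀ L U).inv ≫ ε_ L X₀ ▷ U ≫ (λ_ U).hom)) ▷ D ⊗≫ 𝟙 _ := by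
      monoidal
    _ = 𝟙 _ ⊗≫ ((U ⊗ D : C)) ◁ η_ X₀ D ⊗≫ ((b.β (U ⊗ D)).inv ≫
        ((b.β (U ⊗ D)).hom ≫ (α_ U D X₀).hom ≫ U ◁ ε_ X₀ D ≫ (ρ_ U).hom)) ▷ D ⊗≫ 𝟙 _ := by
      rw [SX]
    _ = 𝟙 _ ⊗≫ U ◁ (D ◁ η_ X₀ D ⊗≫ ε_ X₀ D ▷ D) ⊗≫ 𝟙 _ := by
      rw [Iso.inv_hom_id_assoc]; monoidal
    _ = _ := by rw [ExactPairing.coevaluation_evaluation'']; monoidal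

theorem T3 (U : C) : Ξh X₀ D L b U ≫ Ξi X₀ D L b U = 𝟙 (L ⊗ U) := by
  conv_lhs => rw [Ξi]
  calc
    _ = 𝟙 _ ⊗≫ (𝟙_ C ◁ Ξh X₀ D L b U ≫ η_ L X₀ ▷ (U ⊗ D)) ⊗≫
        L ◁ (b.β (U ⊗ D)).hom ⊗≫ ((L ⊗ U : C)) ◁ ε_ X₀ D ⊗≫ 𝟙 _ := by
      monoidal
    _ = 𝟙 _ ⊗≫ η_ L X₀ ▷ (L ⊗ U) ⊗≫
        L ◁ (X₀ ◁ Ξh X₀ D L b U ≫ (b.β (U ⊗ D)).hom) ⊗≫ ((L ⊗ U : C)) ◁ ε_ X₀ D ⊗≫ 𝟙 _ := by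
      rw [whisker_exchange]; monoidal
    _ = 𝟙 _ ⊗≫ η_ L X₀ ▷ (L ⊗ U) ⊗≫
        L ◁ ((b.β (L ⊗ U)).hom ≫ Ξh X₀ D L b U ▷ X₀) ⊗≫ ((L ⊗ U : C)) ◁ ε_ X₀ D ⊗≫ 𝟙 _ := by
      rw [b.naturality]
    _ = 𝟙 _ ⊗≫ η_ L X₀ ▷ (L ⊗ U) ⊗≫ L ◁ ((b.β (L ⊗ U)).hom ≫
        (Ξh X₀ D L b U ▷ X₀ ≫ (α_ U D X₀).hom ≫ U ◁ ε_ X₀ D ≫ (ρ_ U).hom)) ⊗≫ 𝟙 _ := by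
      monoidal
    _ = 𝟙 _ ⊗≫ η_ L X₀ ▷ (L ⊗ U) ⊗≫ L ◁ ((b.β (L ⊗ U)).hom ≫
        ((b.β (L ⊗ U)).inv ≫ (α_ X₀ L U).inv ≫ ε_ L X₀ ▷ U ≫ (λ_ U).hom)) ⊗≫ 𝟙 _ := by
      rw [SX']
    _ = 𝟙 _ ⊗≫ (η_ L X₀ ▷ L ⊗≫ L ◁ ε_ L X₀) ▷ U ⊗≫ 𝟙 _ := by
      rw [Iso.hom_inv_id_assoc]; monoidal
    _ = _ := by rw [ExactPairing.evaluation_coevaluation'']; monoidal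

theorem NΞ {U U' : C} (f : U ⟶ U') :
    (L ◁ f) ≫ Ξh X₀ D L b U' = Ξh X₀ D L b U ≫ (f ▷ D) := by
  dsimp only [Ξh]
  calc
    _ = 𝟙 _ ⊗≫ ((L ◁ f) ▷ 𝟙_ C ≫ ((L ⊗ U' : C)) ◁ η_ X₀ D) ⊗≫
        (b.β (L ⊗ U')).inv ▷ D ⊗≫ ε_ L X₀ ▷ (U' ⊗ D) ⊗≫ 𝟙 _ := by
      monoidal
    _ = 𝟙 _ ⊗≫ ((L ⊗ U : C)) ◁ η_ X₀ D ⊗≫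
        (((L ◁ f) ▷ X₀ ≫ (b.β (L ⊗ U')).inv) ▷ D) ⊗≫ ε_ L X₀ ▷ (U' ⊗ D) ⊗≫ 𝟙 _ := by
      rw [← whisker_exchange]; monoidal
    _ = 𝟙 _ ⊗≫ ((L ⊗ U : C)) ◁ η_ X₀ D ⊗≫
        (((b.β (L ⊗ U)).inv ≫ X₀ ◁ (L ◁ f)) ▷ D) ⊗≫ ε_ L X₀ ▷ (U' ⊗ D) ⊗≫ 𝟙 _ := by
      rw [nat_inv]
    _ = 𝟙 _ ⊗≫ ((L ⊗ U : C)) ◁ η_ X₀ D ⊗≫ (b.β (L ⊗ U)).inv ▷ D ⊗≫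
        ((X₀ ⊗ L) ◁ (f ▷ D) ≫ ε_ L X₀ ▷ (U' ⊗ D)) ⊗≫ 𝟙 _ := by
      monoidal
    _ = _ := by rw [whisker_exchange]; monoidal

/-- The "mate" form of the half-braiding component on `D`. -/
def γm (V : C) : D ⊗ V ⟶ V ⊗ D :=
  𝟙 (D ⊗ V) ⊗≫ ((D ⊗ V : C)) ◁ η_ X₀ D ⊗≫ D ◁ (b.β V).inv ▷ D ⊗≫
    ε_ X₀ D ▷ (V ⊗ D) ⊗≫ 𝟙 (V ⊗ D)

theorem S7 (V : C) :
    (λ_ V).inv ≫ η_ X₀ D ▷ V ≫ (α_ X₀ D V).hom ≫ X₀ ◁ γm X₀ D b V ≫ (α_ X₀ V D).inv =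
    (ρ_ V).inv ≫ V ◁ η_ X₀ D ≫ (α_ V X₀ D).inv ≫ (b.β V).inv ▷ D := by
  dsimp only [γm]
  calc
    _ = 𝟙 _ ⊗≫ (𝟙_ C ◁ ((ρ_ V).inv ≫ V ◁ η_ X₀ D ≫ (α_ V X₀ D).inv ≫ (b.β V).inv ▷ D) ≫
          η_ X₀ D ▷ ((X₀ ⊗ V) ⊗ D)) ⊗≫
        X₀ ◁ (ε_ X₀ D ▷ (V ⊗ D)) ⊗≫ 𝟙 _ := by
      rw [whisker_exchange]; monoidal
    _ = 𝟙 _ ⊗≫ ((ρ_ V).inv ≫ V ◁ η_ X₀ D ≫ (α_ V X₀ D).inv ≫ (b.β V).inv ▷ D) ⊗≫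
        (η_ X₀ D ▷ X₀ ⊗≫ X₀ ◁ ε_ X₀ D) ▷ (V ⊗ D) ⊗≫ 𝟙 _ := by
      monoidal
    _ = _ := by rw [ExactPairing.evaluation_coevaluation'']; monoidal

theorem SG (V : C) : φ X₀ D L b ▷ V ≫ Ξh X₀ D L b V = γm X₀ D b V := by
  conv_lhs => rw [Ξh]
  calc
    _ = 𝟙 _ ⊗≫ ((φ X₀ D L b ▷ V) ▷ 𝟙_ C ≫ ((L ⊗ V : C)) ◁ η_ X₀ D) ⊗≫
        (b.β (L ⊗ V)).inv ▷ D ⊗≫ ε_ L X₀ ▷ (V ⊗ D) ⊗≫ 𝟙 _ := by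
      monoidal
    _ = 𝟙 _ ⊗≫ ((D ⊗ V : C)) ◁ η_ X₀ D ⊗≫
        (((φ X₀ D L b ▷ V) ▷ X₀ ≫ (b.β (L ⊗ V)).inv) ▷ D) ⊗≫ ε_ L X₀ ▷ (V ⊗ D) ⊗≫ 𝟙 _ := by
      rw [← whisker_exchange]; monoidal
    _ = 𝟙 _ ⊗≫ ((D ⊗ V : C)) ◁ η_ X₀ D ⊗≫
        (((b.β (D ⊗ V)).inv ≫ X₀ ◁ (φ X₀ D L b ▷ V)) ▷ D) ⊗≫ ε_ L X₀ ▷ (V ⊗ D) ⊗≫ 𝟙 _ := by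
      rw [nat_inv]
    _ = 𝟙 _ ⊗≫ ((D ⊗ V : C)) ◁ η_ X₀ D ⊗≫ (b.β (D ⊗ V)).inv ▷ D ⊗≫
        (((X₀ ◁ φ X₀ D L b ≫ ε_ L X₀) ▷ V) ▷ D) ⊗≫ 𝟙 _ := by
      monoidal
    _ = 𝟙 _ ⊗≫ ((D ⊗ V : C)) ◁ η_ X₀ D ⊗≫ (b.β (D ⊗ V)).inv ▷ D ⊗≫
        ((((b.β D).hom ≫ ε_ X₀ D) ▷ V) ▷ D) ⊗≫ 𝟙 _ := by
      rw [S4]; dsimp only [tev]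
    _ = 𝟙 _ ⊗≫ ((D ⊗ V : C)) ◁ η_ X₀ D ⊗≫ D ◁ (b.β V).inv ▷ D ⊗≫
        ((((b.β D).inv ≫ (b.β D).hom) ▷ V) ▷ D) ⊗≫ (ε_ X₀ D ▷ V) ▷ D ⊗≫ 𝟙 _ := by
      rw [minv]; monoidal
    _ = _ := by rw [Iso.inv_hom_id]; dsimp only [γm]; monoidal

theorem assoc_nat (U V : C) : (b.β (L ⊗ (U ⊗ V))).inv =
    ((α_ L U V).inv ▷ X₀) ≫ (b.β ((L ⊗ U) ⊗ V)).inv ≫ (X₀ ◁ (α_ L U V).hom) := by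
  rw [← nat_inv X₀ b (α_ L U V).hom, ← Category.assoc, ← comp_whiskerRight,
    Iso.inv_hom_id, id_whiskerRight, Category.id_comp]

theorem H3' (U V : C) : Ξh X₀ D L b (U ⊗ V) =
    𝟙 (L ⊗ (U ⊗ V)) ⊗≫ Ξh X₀ D L b U ▷ V ⊗≫ U ◁ γm X₀ D b V ⊗≫ 𝟙 ((U ⊗ V) ⊗ D) := by
  conv_lhs => rw [Ξh]
  calc
    _ = 𝟙 _ ⊗≫ ((L ⊗ (U ⊗ V) : C)) ◁ η_ X₀ D ⊗≫
        ((((α_ L U V).inv ▷ X₀) ≫ (b.β ((L ⊗ U) ⊗ V)).inv ≫ (X₀ ◁ (α_ L U V).hom)) ▷ D) ⊗≫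
        ε_ L X₀ ▷ ((U ⊗ V) ⊗ D) ⊗≫ 𝟙 _ := by
      rw [← assoc_nat]; monoidal
    _ = 𝟙 _ ⊗≫ (((L ⊗ U) ⊗ V : C)) ◁ η_ X₀ D ⊗≫ ((L ⊗ U : C)) ◁ (b.β V).inv ▷ D ⊗≫
        ((b.β (L ⊗ U)).inv ▷ V) ▷ D ⊗≫ ε_ L X₀ ▷ (U ⊗ (V ⊗ D)) ⊗≫ 𝟙 _ := by
      rw [minv]; monoidal
    _ = 𝟙 _ ⊗≫ ((L ⊗ U : C)) ◁ ((ρ_ V).inv ≫ V ◁ η_ X₀ D ≫ (α_ V X₀ D).inv ≫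
          (b.β V).inv ▷ D) ⊗≫
        (((b.β (L ⊗ U)).inv ≫ (α_ X₀ L U).inv ≫ ε_ L X₀ ▷ U ≫ (λ_ U).hom) ▷ (V ⊗ D)) ⊗≫
        𝟙 _ := by
      monoidal
    _ = 𝟙 _ ⊗≫ ((L ⊗ U : C)) ◁ ((λ_ V).inv ≫ η_ X₀ D ▷ V ≫ (α_ X₀ D V).hom ≫
          X₀ ◁ γm X₀ D b V ≫ (α_ X₀ V D).inv) ⊗≫
        (((b.β (L ⊗ U)).inv ≫ (α_ X₀ L U).inv ≫ ε_ L X₀ ▷ U ≫ (λ_ U).hom) ▷ (V ⊗ D)) ⊗≫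
        𝟙 _ := by
      rw [S7]
    _ = 𝟙 _ ⊗≫ (((L ⊗ U : C)) ◁ η_ X₀ D) ▷ V ⊗≫
        ((((L ⊗ U) ⊗ X₀ : C)) ◁ γm X₀ D b V ≫
          ((b.β (L ⊗ U)).inv ≫ (α_ X₀ L U).inv ≫ ε_ L X₀ ▷ U ≫ (λ_ U).hom) ▷ (V ⊗ D)) ⊗≫
        𝟙 _ := by
      monoidal
    _ = 𝟙 _ ⊗≫ (((L ⊗ U : C)) ◁ η_ X₀ D) ▷ V ⊗≫
        (((b.β (L ⊗ U)).inv ≫ (α_ X₀ L U).inv ≫ ε_ L X₀ ▷ U ≫ (λ_ U).hom) ▷ (D ⊗ V)) ⊗≫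
        U ◁ γm X₀ D b V ⊗≫ 𝟙 _ := by
      rw [whisker_exchange]; monoidal
    _ = _ := by dsimp only [Ξh]; monoidal

theorem H5 (U : C) :
    ((α_ L X₀ U).hom ≫ L ◁ (b.β U).hom ≫ (α_ L U X₀).inv ≫
      ((Ξh X₀ D L b U ≫ U ◁ φ X₀ D L b) ▷ X₀) ≫ (α_ U L X₀).hom) ≫
      U ◁ (χ X₀ D L b ▷ X₀ ≫ ε_ X₀ D) =
    ((χ X₀ D L b ▷ X₀ ≫ ε_ X₀ D) ▷ U) ≫ (λ_ U).hom ≫ (ρ_ U).inv := by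
  calc
    _ = 𝟙 _ ⊗≫ L ◁ (b.β U).hom ⊗≫ Ξh X₀ D L b U ▷ X₀ ⊗≫
        U ◁ ((φ X₀ D L b ≫ χ X₀ D L b) ▷ X₀) ⊗≫ U ◁ ε_ X₀ D ⊗≫ 𝟙 _ := by
      monoidal
    _ = 𝟙 _ ⊗≫ L ◁ (b.β U).hom ⊗≫
        (Ξh X₀ D L b U ▷ X₀ ≫ (α_ U D X₀).hom ≫ U ◁ ε_ X₀ D ≫ (ρ_ U).hom) ⊗≫ 𝟙 _ := by
      rw [E1]; monoidal
    _ = 𝟙 _ ⊗≫ L ◁ (b.β U).hom ⊗≫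
        ((b.β (L ⊗ U)).inv ≫ (α_ X₀ L U).inv ≫ ε_ L X₀ ▷ U ≫ (λ_ U).hom) ⊗≫ 𝟙 _ := by
      rw [SX']
    _ = 𝟙 _ ⊗≫ L ◁ ((b.β U).hom ≫ (b.β U).inv) ⊗≫ ((b.β L).inv ≫ ε_ L X₀) ▷ U ⊗≫ 𝟙 _ := by
      rw [minv]; monoidal
    _ = 𝟙 _ ⊗≫ tev' X₀ L b ▷ U ⊗≫ 𝟙 _ := by
      rw [Iso.hom_inv_id]; dsimp only [tev']; monoidal
    _ = _ := by rw [S5]; monoidal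

theorem H6 (U : C) : ((η_ X₀ D ≫ X₀ ◁ φ X₀ D L b) ▷ U) ≫
    ((α_ X₀ L U).hom ≫ X₀ ◁ (Ξh X₀ D L b U ≫ U ◁ φ X₀ D L b) ≫ (α_ X₀ U L).inv ≫
      (b.β U).hom ▷ L ≫ (α_ U X₀ L).hom) =
    (λ_ U).hom ≫ (ρ_ U).inv ≫ U ◁ (η_ X₀ D ≫ X₀ ◁ φ X₀ D L b) := by
  calc
    _ = 𝟙 _ ⊗≫ η_ X₀ D ▷ U ⊗≫ X₀ ◁ (φ X₀ D L b ▷ U ≫ Ξh X₀ D L b U) ⊗≫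
        X₀ ◁ (U ◁ φ X₀ D L b) ⊗≫ (b.β U).hom ▷ L ⊗≫ 𝟙 _ := by
      monoidal
    _ = 𝟙 _ ⊗≫ ((λ_ U).inv ≫ η_ X₀ D ▷ U ≫ (α_ X₀ D U).hom ≫ X₀ ◁ γm X₀ D b U ≫
          (α_ X₀ U D).inv) ⊗≫
        (((X₀ ⊗ U : C)) ◁ φ X₀ D L b ≫ (b.β U).hom ▷ L) ⊗≫ 𝟙 _ := by
      rw [SG]; monoidal
    _ = 𝟙 _ ⊗≫ ((ρ_ U).inv ≫ U ◁ η_ X₀ D ≫ (α_ U X₀ D).inv ≫ (b.β U).inv ▷ D) ⊗≫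
        (((X₀ ⊗ U : C)) ◁ φ X₀ D L b ≫ (b.β U).hom ▷ L) ⊗≫ 𝟙 _ := by
      rw [S7]
    _ = 𝟙 _ ⊗≫ U ◁ η_ X₀ D ⊗≫ (((b.β U).inv ≫ (b.β U).hom) ▷ D) ⊗≫
        ((U ⊗ X₀ : C)) ◁ φ X₀ D L b ⊗≫ 𝟙 _ := by
      rw [whisker_exchange]; monoidal
    _ = _ := by rw [Iso.inv_hom_id]; monoidal

/-- The half-braiding on the left dual `L`. -/
def dualHalfBraiding : HalfBraiding L where
  β U := ⟨Ξh X₀ D L b U ≫ U ◁ φ X₀ D L b, U ◁ χ X₀ D L b ≫ Ξi X₀ D L b U,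
    by rw [Category.assoc, ← Category.assoc (U ◁ φ X₀ D L b), ← MonoidalCategory.whiskerLeft_comp,
        E1, MonoidalCategory.whiskerLeft_id, Category.id_comp, T3],
    by rw [Category.assoc, ← Category.assoc (Ξi X₀ D L b U), T4, Category.id_comp,
        ← MonoidalCategory.whiskerLeft_comp, E2, MonoidalCategory.whiskerLeft_id]⟩
  monoidal U V := by
    dsimp only
    calc Ξh X₀ D L b (U ⊗ V) ≫ (U ⊗ V) ◁ φ X₀ D L b
      _ = (𝟙 (L ⊗ (U ⊗ V)) ⊗≫ Ξh X₀ D L b U ▷ V ⊗≫ U ◁ γm X₀ D b V ⊗≫ 𝟙 ((U ⊗ V) ⊗ D)) ≫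
          (U ⊗ V) ◁ φ X₀ D L b := by rw [H3']
      _ = 𝟙 _ ⊗≫ Ξh X₀ D L b U ▷ V ⊗≫ U ◁ (φ X₀ D L b ▷ V ≫ Ξh X₀ D L b V) ⊗≫
          U ◁ (V ◁ φ X₀ D L b) ⊗≫ 𝟙 _ := by rw [SG]; monoidal
      _ = _ := by monoidal
  naturality {U U'} f := by
    dsimp only
    rw [← Category.assoc, NΞ, Category.assoc, Category.assoc, whisker_exchange]

section Assembly

variable [RigidCategory C] (X : Center C)

/-- The dual object in the center. -/
def dualObj : Center C :=
  ⟨(ᘁ(X.1) : C), dualHalfBraiding X.1 ((X.1)ᘁ) (ᘁ(X.1)) X.2⟩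

/-- The exact pairing on `X.1` and `ᘁX.1` transported across `χ`. -/
def pLX : ExactPairing X.1 (ᘁ(X.1) : C) :=
  exactPairingCongrRight (X := X.1) (Y' := (X.1)ᘁ)
    ⟨χ X.1 ((X.1)ᘁ) (ᘁ(X.1)) X.2, φ X.1 ((X.1)ᘁ) (ᘁ(X.1)) X.2, E2 _ _ _ _, E1 _ _ _ _⟩

/-- Evaluation as a morphism in the center. -/
def evalC : dualObj X ⊗ X ⟶ 𝟙_ (Center C) where
  f := χ X.1 ((X.1)ᘁ) (ᘁ(X.1)) X.2 ▷ X.1 ≫ ε_ X.1 ((X.1)ᘁ)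
  comm U := by
    rw [Center.tensor_β]
    dsimp [dualObj, dualHalfBraiding]
    exact (H5 X.1 ((X.1)ᘁ) (ᘁ(X.1)) X.2 U).symm

/-- Coevaluation as a morphism in the center. -/
def coevalC : 𝟙_ (Center C) ⟶ X ⊗ dualObj X where
  f := η_ X.1 ((X.1)ᘁ) ≫ X.1 ◁ φ X.1 ((X.1)ᘁ) (ᘁ(X.1)) X.2
  comm U := by
    rw [Center.tensor_β]
    dsimp [dualObj, dualHalfBraiding]
    exact (H6 X.1 ((X.1)ᘁ) (ᘁ(X.1)) X.2 U).trans (Category.assoc _ _ _).symm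

instance : (Center.forget C).Faithful where
  map_injective h := by ext; exact h

/-- Every object of the center has a right dual. -/
def hasRightDualCenter : HasRightDual X where
  rightDual := dualObj X
  exact := by
    letI : ExactPairing ((Center.forget C).obj X) ((Center.forget C).obj (dualObj X)) := pLX X
    exact ExactPairing.ofFaithful (Center.forget C) (evalC X) (coevalC X)
      (by simp only [Center.forget_map, Center.forget_δ, Center.forget_ε, Category.id_comp,
          Category.comp_id]; erw [Category.id_comp, Category.comp_id]; rfl)
      (by simp only [Center.forget_map, Center.forget_η, Center.forget_μ, Category.id_comp,
          Category.comp_id]; erw [Category.id_comp, Category.comp_id]; rfl)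

end Assembly

end CenterRigidAux

open CenterRigidAux in
/-- If `C` is a rigid monoidal category, then its Drinfeld center
`Center C` is rigid: every object `(X, λ)` of `Center C` has a left dual (with underlying
object the left dual `X*` of `X`, equipped with the half-braiding whose components are the
mates of the components of `λ`, so that the evaluation and coevaluation of `X` are morphisms
in `Center C`) and likewise a right dual.  Since `RigidCategory` carries the data of the
duals, the existence claim is stated as `Nonempty`. -/
theorem center_rigidCategory {C : Type u} [Category.{v} C] [MonoidalCategory C]
    [RigidCategory C] : Nonempty (RigidCategory (Center C)) := by
  letI : RightRigidCategory (Center C) := { rightDual := fun X => hasRightDualCenter X }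
  exact ⟨BraidedCategory.rigidCategoryOfRightRigidCategory⟩
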